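/- Let d ≥ 3 be an integer and s = (s_0,…,s_d) ∈ ℂ^{d+1}. Define the functions on ℂ: F₀(x₀,x₁) = Σ_{j=0}^{d−1} C(d−1,j) s_j x₀^{d−1−j} x₁^{j}, F₁(x₀,x₁) = Σ_{j=0}^{d−1} C(d−1,j) s_{j+1} x₀^{d−1−j} x₁^{j}, p(z) = Σ_{j=0}^{d−1} C(d−1,j) s_{j+1} z^{j}, q(z) = Σ_{j=0}^{d−1} C(d−1,j) s_j z^{j}. Then for every z ∈ ℂ the following are equivalent: (i) there exists x₀ ∈ ℂ, x₀ ≠ 0, such that F₀(x₀, x₀·z) = conj(x₀) and F₁(x₀, x₀·z) = conj(x₀·z); (ii) conj(z)·q(z) = p(z) and q(z) ≠ 0. -/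

import Mathlib

lemma sum_factor (d : ℕ) (c : Fin d → ℂ) (x₀ z : ℂ) :
    ∑ j : Fin d, c j * x₀ ^ (d - 1 - (j : ℕ)) * (x₀ * z) ^ (j : ℕ)
      = x₀ ^ (d - 1) * ∑ j : Fin d, c j * z ^ (j : ℕ) := by
  rw [Finset.mul_sum]
  apply Finset.sum_congr rfl
  intro j _
  have hj : (j : ℕ) ≤ d - 1 := Nat.le_sub_one_of_lt j.isLt
  rw [mul_pow,
    show c j * x₀ ^ (d - 1 - (j : ℕ)) * (x₀ ^ (j : ℕ) * z ^ (j : ℕ))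
      = (x₀ ^ (d - 1 - (j : ℕ)) * x₀ ^ (j : ℕ)) * (c j * z ^ (j : ℕ)) by ring,
    ← pow_add, Nat.sub_add_cancel hj]

/-- For d ≥ 3, a point z ∈ ℂ corresponds to a nonzero anti-fixed point
(x₀, x₀z) of S × ⊗^{d−1}x = conj(x) iff conj(z)·q(z) = p(z) and q(z) ≠ 0. -/
theorem stmt_12 (d : ℕ) (hd : 3 ≤ d) (s : Fin (d + 1) → ℂ)
    (F₀ F₁ : ℂ → ℂ → ℂ) (p q : ℂ → ℂ)
    (hF₀ : ∀ x₀ x₁, F₀ x₀ x₁ = ∑ j : Fin d, ((d - 1).choose j : ℂ) * s j.castSucc *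
        x₀ ^ (d - 1 - (j : ℕ)) * x₁ ^ (j : ℕ))
    (hF₁ : ∀ x₀ x₁, F₁ x₀ x₁ = ∑ j : Fin d, ((d - 1).choose j : ℂ) * s j.succ *
        x₀ ^ (d - 1 - (j : ℕ)) * x₁ ^ (j : ℕ))
    (hp : ∀ z, p z = ∑ j : Fin d, ((d - 1).choose j : ℂ) * s j.succ * z ^ (j : ℕ))
    (hq : ∀ z, q z = ∑ j : Fin d, ((d - 1).choose j : ℂ) * s j.castSucc * z ^ (j : ℕ)) :
    ∀ z : ℂ,
      ((∃ x₀ : ℂ, x₀ ≠ 0 ∧ F₀ x₀ (x₀ * z) = (starRingEnd ℂ) x₀ ∧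
          F₁ x₀ (x₀ * z) = (starRingEnd ℂ) (x₀ * z)) ↔
        ((starRingEnd ℂ) z * q z = p z ∧ q z ≠ 0)) := by
  intro z
  have hF₀' : ∀ x₀ : ℂ, F₀ x₀ (x₀ * z) = x₀ ^ (d - 1) * q z := by
    intro x₀
    rw [hF₀, hq, sum_factor d (fun j => ((d - 1).choose j : ℂ) * s j.castSucc)]
  have hF₁' : ∀ x₀ : ℂ, F₁ x₀ (x₀ * z) = x₀ ^ (d - 1) * p z := by
    intro x₀
    rw [hF₁, hp, sum_factor d (fun j => ((d - 1).choose j : ℂ) * s j.succ)]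
  constructor
  · rintro ⟨x₀, hx₀, h0, h1⟩
    rw [hF₀'] at h0
    rw [hF₁'] at h1
    have hxp : x₀ ^ (d - 1) ≠ 0 := pow_ne_zero _ hx₀
    have hqz : q z ≠ 0 := by
      intro h
      rw [h, mul_zero] at h0
      exact hx₀ (by simpa using h0.symm)
    refine ⟨?_, hqz⟩
    have : x₀ ^ (d - 1) * ((starRingEnd ℂ) z * q z) = x₀ ^ (d - 1) * p z := by
      rw [h1, map_mul]
      rw [show x₀ ^ (d - 1) * ((starRingEnd ℂ) z * q z)
        = (starRingEnd ℂ) z * (x₀ ^ (d - 1) * q z) by ring, h0]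
      ring
    exact mul_left_cancel₀ hxp this
  · rintro ⟨hpq, hqz⟩
    obtain ⟨e, rfl⟩ : ∃ e, d = e + 2 := ⟨d - 2, by omega⟩
    have hd1 : e + 2 - 1 = e + 1 := rfl
    set a : ℝ := ‖q z‖ with ha_def
    have ha : 0 < a := norm_pos_iff.mpr hqz
    set t : ℝ := a ^ (-(1 : ℝ) / (e : ℝ)) with ht_def
    have ht : 0 < t := Real.rpow_pos_of_pos ha _
    have he : (1 : ℕ) ≤ e := by omega
    have heR : (e : ℝ) ≠ 0 := by
      have : (1 : ℝ) ≤ (e : ℝ) := by exact_mod_cast he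
      linarith
    have htde : t ^ e * a = 1 := by
      rw [ht_def, ← Real.rpow_natCast (a ^ (-(1:ℝ)/(e:ℝ))) e, ← Real.rpow_mul ha.le,
        div_mul_cancel₀ _ heR, Real.rpow_neg_one, inv_mul_cancel₀ ha.ne']
    have haC : (a : ℂ) ≠ 0 := by exact_mod_cast ha.ne'
    obtain ⟨w, hw⟩ := IsAlgClosed.exists_pow_nat_eq
      ((starRingEnd ℂ) (q z) / (a : ℂ)) (show 0 < e + 2 by omega)
    have hw' : w ^ (e + 2) * (a : ℂ) = (starRingEnd ℂ) (q z) := by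
      rw [hw, div_mul_cancel₀ _ haC]
    have hcqz : (starRingEnd ℂ) (q z) ≠ 0 := by simpa using hqz
    have hw0 : w ≠ 0 := by
      intro h
      rw [h, zero_pow (by omega), zero_mul] at hw'
      exact hcqz hw'.symm
    have hwabs : ‖w‖ = 1 := by
      have h1 : ‖w‖ ^ (e + 2) = 1 := by
        rw [← norm_pow, hw, norm_div, Complex.norm_conj, Complex.norm_real, Real.norm_eq_abs,
          abs_of_pos ha, div_self ha.ne']
      have h2 := pow_left_inj₀ (n := e + 2) (norm_nonneg w) zero_le_one
        (by omega)
      exact h2.mp (by rw [h1, one_pow])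
    have hww : w * (starRingEnd ℂ) w = 1 := by
      rw [Complex.mul_conj, Complex.normSq_eq_norm_sq, hwabs]
      norm_num
    have hcq : (starRingEnd ℂ) (q z) * q z = (a : ℂ) ^ 2 := by
      rw [mul_comm, Complex.mul_conj, Complex.normSq_eq_norm_sq]
      push_cast
      rfl
    have htdeC : (t : ℂ) ^ e * (a : ℂ) = 1 := by exact_mod_cast htde
    set x₀ : ℂ := (t : ℂ) * w with hx₀_def
    have hx₀ : x₀ ≠ 0 := mul_ne_zero (by exact_mod_cast ht.ne') hw0
    have hconj : (starRingEnd ℂ) x₀ = (t : ℂ) * (starRingEnd ℂ) w := by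
      rw [hx₀_def, map_mul, Complex.conj_ofReal]
    have key : x₀ ^ (e + 2 - 1) * q z = (starRingEnd ℂ) x₀ := by
      rw [hd1, hconj]
      apply mul_right_cancel₀ (mul_ne_zero hw0 haC)
      have expand : x₀ ^ (e + 1) * q z * (w * (a : ℂ))
          = (t : ℂ) ^ (e + 1) * (w ^ (e + 2) * (a : ℂ)) * q z := by
        rw [hx₀_def]; ring
      rw [expand, hw']
      calc (t : ℂ) ^ (e + 1) * (starRingEnd ℂ) (q z) * q z
          = (t : ℂ) ^ (e + 1) * ((starRingEnd ℂ) (q z) * q z) := by ring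
        _ = (t : ℂ) * ((t : ℂ) ^ e * (a : ℂ)) * (a : ℂ) := by rw [hcq]; ring
        _ = (t : ℂ) * (a : ℂ) := by rw [htdeC]; ring
        _ = (t : ℂ) * (w * (starRingEnd ℂ) w) * (a : ℂ) := by rw [hww]; ring
        _ = (t : ℂ) * (starRingEnd ℂ) w * (w * (a : ℂ)) := by ring
    refine ⟨x₀, hx₀, ?_, ?_⟩
    · rw [hF₀', key]
    · rw [hF₁', ← hpq, map_mul]
      calc x₀ ^ (e + 2 - 1) * ((starRingEnd ℂ) z * q z)
          = (starRingEnd ℂ) z * (x₀ ^ (e + 2 - 1) * q z) := by ring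
        _ = (starRingEnd ℂ) x₀ * (starRingEnd ℂ) z := by rw [key]; ring
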